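/- arXiv:1812.06392 — 4 statements merged into one kernel-verified Lean document; each statement's English description precedes it below -/
import Mathlib

section
/- The improper integral ∫₀^∞ e^t·t²/(e^t - 1)² dt equals 2·ζ(2), i.e. π²/3. -/
open MeasureTheory Complex Set

lemma aux_hasSum_mellin : HasSum (fun n : ℕ ↦ Complex.Gamma 3 * (n : ℂ) / (n : ℝ) ^ (3 : ℂ))
    (mellin (fun t : ℝ ↦ ((Real.exp t / (Real.exp t - 1) ^ 2 : ℝ) : ℂ)) 3) := by
  apply hasSum_mellin (p := fun n : ℕ ↦ (n : ℝ))
  · intro n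
    rcases Nat.eq_zero_or_pos n with h | h
    · exact Or.inl (by simp [h])
    · exact Or.inr (by exact_mod_cast h)
  · norm_num
  · intro t ht
    rw [mem_Ioi] at ht
    have hr : ‖((Real.exp (-t) : ℝ) : ℂ)‖ < 1 := by
      rw [Complex.norm_real, Real.norm_eq_abs, Real.abs_exp]
      exact Real.exp_lt_one_iff.mpr (neg_lt_zero.mpr ht)
    have hgeom := hasSum_coe_mul_geometric_of_norm_lt_one (𝕜 := ℂ) hr
    have key : Real.exp t / (Real.exp t - 1) ^ 2
        = Real.exp (-t) / (1 - Real.exp (-t)) ^ 2 := by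
      have h1 : Real.exp t ≠ 0 := (Real.exp_pos t).ne'
      have h2 : Real.exp t - 1 ≠ 0 := by
        have : (1:ℝ) < Real.exp t := by
          rw [← Real.exp_zero]; exact Real.exp_lt_exp.mpr ht
        linarith
      rw [Real.exp_neg]
      field_simp
    convert hgeom using 2 with n
    · rfl
    · rw [← Complex.ofReal_pow, ← Real.exp_nat_mul]
      push_cast
      ring_nf
    · rw [key]
      push_cast
      ring
  · have : (fun n : ℕ ↦ ‖(n : ℂ)‖ / (n : ℝ) ^ ((3:ℂ).re))
        = fun n : ℕ ↦ 1 / (n : ℝ) ^ 2 := by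
      funext n
      rcases Nat.eq_zero_or_pos n with h | h
      · simp [h]
      · have hn : (0:ℝ) < n := by exact_mod_cast h
        rw [Complex.norm_natCast]
        rw [show ((3:ℂ).re) = ((3:ℕ):ℝ) by norm_num, Real.rpow_natCast]
        field_simp
    rw [this]
    exact Real.summable_one_div_nat_pow.mpr one_lt_two

theorem integral_exp_mul_sq_div_exp_sub_one_sq :
    ((∫ t in Set.Ioi (0:ℝ), Real.exp t * t ^ 2 / (Real.exp t - 1) ^ 2 : ℝ) : ℂ) =
      2 * riemannZeta 2 ∧
    (∫ t in Set.Ioi (0:ℝ), Real.exp t * t ^ 2 / (Real.exp t - 1) ^ 2 : ℝ) =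
      Real.pi ^ 2 / 3 := by
  have h1 : mellin (fun t : ℝ ↦ ((Real.exp t / (Real.exp t - 1) ^ 2 : ℝ) : ℂ)) 3
      = ((∫ t in Set.Ioi (0:ℝ), Real.exp t * t ^ 2 / (Real.exp t - 1) ^ 2 : ℝ) : ℂ) := by
    rw [mellin]
    rw [show ((∫ t in Set.Ioi (0:ℝ), Real.exp t * t ^ 2 / (Real.exp t - 1) ^ 2 : ℝ) : ℂ)
      = ∫ t in Set.Ioi (0:ℝ), ((Real.exp t * t ^ 2 / (Real.exp t - 1) ^ 2 : ℝ) : ℂ) from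
      (integral_ofReal (𝕜 := ℂ)).symm]
    refine setIntegral_congr_fun measurableSet_Ioi (fun t ht ↦ ?_)
    rw [mem_Ioi] at ht
    rw [smul_eq_mul, show (3:ℂ) - 1 = ((2:ℕ):ℂ) by norm_num, Complex.cpow_natCast]
    push_cast
    ring
  -- value of the sum
  have h2 : HasSum (fun n : ℕ ↦ Complex.Gamma 3 * (n : ℂ) / (n : ℝ) ^ (3 : ℂ))
      ((Real.pi ^ 2 / 3 : ℝ) : ℂ) := by
    have hb := hasSum_zeta_two
    have hc := (Complex.ofRealCLM.hasSum hb).mul_left 2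
    convert hc using 2 with n
    · rfl
    · rcases Nat.eq_zero_or_pos n with h | h
      · simp [h]
      · have hn : (n : ℂ) ≠ 0 := Nat.cast_ne_zero.mpr h.ne'
        rw [show ((3:ℂ)) = ((2:ℕ):ℂ) + 1 by norm_num, Complex.Gamma_nat_eq_factorial]
        rw [show (((n:ℝ)):ℂ) ^ (((2:ℕ):ℂ)+1) = (n:ℂ) ^ (3:ℕ) by
          rw [show ((2:ℕ):ℂ)+1 = ((3:ℕ):ℂ) by norm_num, Complex.cpow_natCast]; push_cast; ring]
        push_cast [Complex.ofRealCLM_apply]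
        field_simp
        ring
    · simp [Complex.ofRealCLM_apply]
      ring
  have h3 := aux_hasSum_mellin.tsum_eq
  rw [h2.tsum_eq] at h3
  have h4 : ((∫ t in Set.Ioi (0:ℝ), Real.exp t * t ^ 2 / (Real.exp t - 1) ^ 2 : ℝ) : ℂ)
      = ((Real.pi ^ 2 / 3 : ℝ) : ℂ) := by rw [← h1, h3]
  constructor
  · rw [h4, riemannZeta_two]
    push_cast
    ring
  · exact_mod_cast h4
end

section
/- The improper integral ∫₀^∞ (1/(e^t - 1) - 1/(t·e^t)) dt equals the Euler–Mascheroni constant γ. -/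
open MeasureTheory Set Real Filter Topology

-- ∫ t in Ioi 0, exp (-(a*t)) = 1/a
lemma int_exp_neg_mul {a : ℝ} (ha : 0 < a) :
    (∫ t in Ioi (0:ℝ), Real.exp (-(a * t))) = 1 / a := by
  rw [show (fun t : ℝ => Real.exp (-(a * t))) = (fun x => Real.exp (-x)) ∘ (fun t => a * t) by rfl]
  have := integral_comp_mul_left_Ioi (fun x => Real.exp (-x)) 0 ha
  simp only [mul_zero] at this
  rw [show (∫ t in Ioi (0:ℝ), ((fun x => Real.exp (-x)) ∘ (fun t => a*t)) t) = ∫ x in Ioi (0:ℝ), Real.exp (-(a*x)) from rfl, this,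
    integral_exp_neg_Ioi_zero, smul_eq_mul, mul_one, one_div]

-- inner interval integral
lemma int_exp_interval {t : ℝ} (ht : 0 < t) (c : ℝ) :
    (∫ s in (1:ℝ)..c, Real.exp (-(s * t))) = (Real.exp (-t) - Real.exp (-(c * t))) / t := by
  have h : ∀ s ∈ Set.uIcc (1:ℝ) c, HasDerivAt (fun s => -Real.exp (-(s * t)) / t)
      (Real.exp (-(s * t))) s := by
    intro s _
    have h1 : HasDerivAt (fun s : ℝ => -(s * t)) (-t) s := by
      simpa [Pi.neg_def] using ((hasDerivAt_id s).mul_const t).neg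
    have h2 := (Real.hasDerivAt_exp (-(s*t))).comp s h1
    have := (h2.neg).div_const t
    convert this using 1
    · rfl
    · rfl
    · rfl
    · rw [mul_neg, neg_neg, mul_div_assoc, div_self ht.ne', mul_one]
  rw [intervalIntegral.integral_eq_sub_of_hasDerivAt h]
  · rw [div_sub_div_same]
    ring_nf
  · apply Continuous.intervalIntegrable
    continuity

lemma exp_neg_integrable : IntegrableOn (fun t : ℝ => Real.exp (-t)) (Ioi 0) := by
  simpa using exp_neg_integrableOn_Ioi 0 one_pos

lemma frullani_aux {c : ℝ} (hc : 1 ≤ c) :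
    Integrable (Function.uncurry (fun t s : ℝ => Real.exp (-(s * t))))
      ((volume.restrict (Ioi (0:ℝ))).prod (volume.restrict (Ioc (1:ℝ) c))) := by
  have hcont : Continuous (Function.uncurry (fun t s : ℝ => Real.exp (-(s * t)))) := by
    apply Continuous.rexp; continuity
  rw [integrable_prod_iff hcont.aestronglyMeasurable]
  constructor
  · refine ae_of_all _ fun t => ?_
    exact (hcont.comp (continuous_const.prodMk continuous_id)).integrableOn_Ioc
  · have hmeas : AEStronglyMeasurable
        (fun t : ℝ => ∫ s in Ioc (1:ℝ) c, ‖Real.exp (-(s * t))‖) (volume.restrict (Ioi 0)) :=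
      hcont.norm.aestronglyMeasurable.integral_prod_right'
    refine Integrable.mono' ((exp_neg_integrable.const_mul (c - 1))) hmeas ?_
    filter_upwards [ae_restrict_mem measurableSet_Ioi] with t ht
    have ht' : (0:ℝ) < t := ht
    have hin : (∫ s in Ioc (1:ℝ) c, ‖Real.exp (-(s * t))‖)
        = (Real.exp (-t) - Real.exp (-(c * t))) / t := by
      simp_rw [Real.norm_eq_abs, abs_of_pos (Real.exp_pos _)]
      rw [← intervalIntegral.integral_of_le hc, int_exp_interval ht']
    rw [Real.norm_eq_abs, show (∫ (y : ℝ) in Ioc 1 c, ‖Function.uncurry (fun t s => Real.exp (-(s * t))) (t, y)‖ ∂volume) = ∫ s in Ioc (1:ℝ) c, ‖Real.exp (-(s * t))‖ from rfl, hin, abs_of_nonneg]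
    · rw [div_le_iff₀ ht']
      have key : Real.exp (-t) - Real.exp (-(c * t))
          = Real.exp (-t) * (1 - Real.exp (-((c - 1) * t))) := by
        rw [mul_sub, mul_one, ← Real.exp_add]; ring_nf
      rw [key]
      have h1 : 1 - Real.exp (-((c - 1) * t)) ≤ (c - 1) * t := by
        nlinarith [Real.add_one_le_exp (-((c - 1) * t))]
      have h2 : 0 ≤ Real.exp (-t) := (Real.exp_pos _).le
      calc Real.exp (-t) * (1 - Real.exp (-((c-1)*t))) ≤ Real.exp (-t) * ((c-1)*t) := by
            apply mul_le_mul_of_nonneg_left h1 h2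
        _ = (c - 1) * Real.exp (-t) * t := by ring
    · apply div_nonneg _ ht'.le
      have : c * t ≥ 1 * t := by nlinarith
      simp only [sub_nonneg, Real.exp_le_exp, neg_le_neg_iff]
      linarith

lemma frullani_integrable {c : ℝ} (hc : 1 ≤ c) :
    IntegrableOn (fun t => (Real.exp (-t) - Real.exp (-(c * t))) / t) (Ioi 0) := by
  have h := (frullani_aux hc).integral_prod_left
  refine (h.congr ?_ : _)
  filter_upwards [ae_restrict_mem measurableSet_Ioi] with t ht
  have ht' : (0:ℝ) < t := ht
  rw [Function.uncurry_def]
  show (∫ s in Ioc (1:ℝ) c, Real.exp (-(s * t))) = _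
  rw [← intervalIntegral.integral_of_le hc, int_exp_interval ht']

lemma frullani_integral {c : ℝ} (hc : 1 ≤ c) :
    (∫ t in Ioi (0:ℝ), (Real.exp (-t) - Real.exp (-(c * t))) / t) = Real.log c := by
  have hswap := integral_integral_swap (frullani_aux hc)
  have h1 : (∫ t in Ioi (0:ℝ), ∫ s in Ioc (1:ℝ) c, Real.exp (-(s * t)))
      = ∫ t in Ioi (0:ℝ), (Real.exp (-t) - Real.exp (-(c * t))) / t := by
    apply setIntegral_congr_ae measurableSet_Ioi
    filter_upwards with t ht
    rw [← intervalIntegral.integral_of_le hc, int_exp_interval ht]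
  have h2 : (∫ s in Ioc (1:ℝ) c, ∫ t in Ioi (0:ℝ), Real.exp (-(s * t))) = Real.log c := by
    have : ∀ s ∈ Ioc (1:ℝ) c, (∫ t in Ioi (0:ℝ), Real.exp (-(s * t))) = 1 / s := by
      intro s hs
      exact int_exp_neg_mul (lt_trans one_pos hs.1)
    rw [setIntegral_congr_ae measurableSet_Ioc (ae_of_all _ this),
      ← intervalIntegral.integral_of_le hc, integral_one_div_of_pos one_pos (lt_of_lt_of_le one_pos hc), div_one]
  rw [← h1, ← h2]
  exact hswap

noncomputable def fγ (t : ℝ) : ℝ := 1 / (Real.exp t - 1) - 1 / (t * Real.exp t)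

lemma exp_sub_one_pos {t : ℝ} (ht : 0 < t) : 0 < Real.exp t - 1 := by
  simpa using Real.exp_lt_exp.mpr ht

lemma fγ_nonneg {t : ℝ} (ht : 0 < t) : 0 ≤ fγ t := by
  have h1 := exp_sub_one_pos ht
  have h2 : 0 < t * Real.exp t := mul_pos ht (Real.exp_pos t)
  have h3 : Real.exp t - 1 ≤ t * Real.exp t := by
    have h4 : Real.exp (-t) * Real.exp t = 1 := by rw [← Real.exp_add]; simp
    nlinarith [mul_le_mul_of_nonneg_right (Real.add_one_le_exp (-t)) (Real.exp_pos t).le]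
  rw [fγ, sub_nonneg]
  exact one_div_le_one_div_of_le h1 h3

lemma fγ_le {t : ℝ} (ht : 0 < t) : fγ t ≤ Real.exp (-t) := by
  have h1 := exp_sub_one_pos ht
  have h2 : 0 < t * Real.exp t := mul_pos ht (Real.exp_pos t)
  have he : Real.exp (-t) = 1 / Real.exp t := by rw [Real.exp_neg]; ring
  rw [fγ, he]
  rw [div_sub_div _ _ h1.ne' h2.ne', div_le_div_iff₀ (by positivity) (Real.exp_pos t)]
  have h3 : t + 1 ≤ Real.exp t := Real.add_one_le_exp t
  nlinarith [Real.exp_pos t]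

lemma sum_geom (n : ℕ) {t : ℝ} (ht : 0 < t) :
    (∑ k ∈ Finset.range n, Real.exp (-(((k:ℝ)+1) * t)))
      = (1 - Real.exp (-((n:ℝ) * t))) / (Real.exp t - 1) := by
  induction n with
  | zero => simp
  | succ n ih =>
    rw [Finset.sum_range_succ, ih]
    have h1 := exp_sub_one_pos ht
    rw [div_add' _ _ _ h1.ne', div_eq_div_iff h1.ne' h1.ne']
    push_cast
    have e1 : Real.exp (-(((n:ℝ)+1) * t)) * Real.exp t = Real.exp (-((n:ℝ) * t)) := by
      rw [← Real.exp_add]; ring_nf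
    nlinarith [e1]

lemma pointwise_id (n : ℕ) {t : ℝ} (ht : 0 < t) :
    (1 - Real.exp (-((n:ℝ) * t))) * fγ t
      = (∑ k ∈ Finset.range n, Real.exp (-(((k:ℝ)+1) * t)))
        - (Real.exp (-t) - Real.exp (-(((n:ℝ)+1) * t))) / t := by
  rw [sum_geom n ht, fγ]
  have h1 := exp_sub_one_pos ht
  have e1 : Real.exp (-(((n:ℝ)+1) * t)) = Real.exp (-((n:ℝ) * t)) * Real.exp (-t) := by
    rw [← Real.exp_add]; ring_nf
  simp only [e1, Real.exp_neg]
  field_simp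

lemma fγ_integrable : IntegrableOn fγ (Ioi (0:ℝ)) := by
  have hcont : ContinuousOn fγ (Ioi (0:ℝ)) := by
    apply ContinuousOn.sub
    · exact continuousOn_const.div (Real.continuous_exp.continuousOn.sub continuousOn_const)
        (fun t ht => (exp_sub_one_pos ht).ne')
    · exact continuousOn_const.div (continuousOn_id.mul Real.continuous_exp.continuousOn)
        (fun t ht => (mul_pos (mem_Ioi.mp ht) (Real.exp_pos t)).ne')
  refine Integrable.mono' exp_neg_integrable
    (hcont.aestronglyMeasurable measurableSet_Ioi) ?_
  filter_upwards [ae_restrict_mem measurableSet_Ioi] with t ht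
  rw [Real.norm_eq_abs, abs_of_nonneg (fγ_nonneg ht)]
  exact fγ_le ht

lemma exp_k_integrable (k : ℕ) :
    IntegrableOn (fun t : ℝ => Real.exp (-(((k:ℝ)+1) * t))) (Ioi (0:ℝ)) := by
  have h : (0:ℝ) < (k:ℝ)+1 := by positivity
  have := exp_neg_integrableOn_Ioi (b := (k:ℝ)+1) 0 h
  simp only [neg_mul] at this
  exact this

lemma harmonic_cast (n : ℕ) :
    (harmonic n : ℝ) = ∑ k ∈ Finset.range n, 1/((k:ℝ)+1) := by
  rw [harmonic, Rat.cast_sum]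
  push_cast
  simp [one_div]

lemma sum_integral (n : ℕ) :
    (∫ t in Ioi (0:ℝ), ∑ k ∈ Finset.range n, Real.exp (-(((k:ℝ)+1) * t)))
      = (harmonic n : ℝ) := by
  rw [integral_finset_sum _ (fun k _ => exp_k_integrable k)]
  have : ∀ k ∈ Finset.range n, (∫ t in Ioi (0:ℝ), Real.exp (-(((k:ℝ)+1) * t))) = 1/((k:ℝ)+1) :=
    fun k _ => int_exp_neg_mul (show (0:ℝ) < (k:ℝ)+1 by positivity)
  rw [Finset.sum_congr rfl this, harmonic_cast]

lemma Fn_integral (n : ℕ) :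
    (∫ t in Ioi (0:ℝ), (1 - Real.exp (-((n:ℝ) * t))) * fγ t)
      = (harmonic n : ℝ) - Real.log ((n:ℝ) + 1) := by
  have hc : (1:ℝ) ≤ (n:ℝ) + 1 := by simp
  have heq : (∫ t in Ioi (0:ℝ), (1 - Real.exp (-((n:ℝ) * t))) * fγ t)
      = ∫ t in Ioi (0:ℝ), ((∑ k ∈ Finset.range n, Real.exp (-(((k:ℝ)+1) * t)))
        - (Real.exp (-t) - Real.exp (-(((n:ℝ)+1) * t))) / t) := by
    apply setIntegral_congr_ae measurableSet_Ioi
    filter_upwards with t ht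
    exact pointwise_id n ht
  rw [heq, integral_sub]
  · rw [sum_integral, frullani_integral hc]
  · exact integrable_finset_sum _ (fun k _ => exp_k_integrable k)
  · exact frullani_integrable hc

lemma main_tendsto :
    Tendsto (fun n : ℕ => ∫ t in Ioi (0:ℝ), (1 - Real.exp (-((n:ℝ) * t))) * fγ t)
      atTop (𝓝 (∫ t in Ioi (0:ℝ), fγ t)) := by
  have hfm : AEStronglyMeasurable fγ (volume.restrict (Ioi (0:ℝ))) :=
    fγ_integrable.aestronglyMeasurable
  refine tendsto_integral_of_dominated_convergence (fun t => Real.exp (-t)) ?_ exp_neg_integrable ?_ ?_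
  · intro n
    exact ((Continuous.aestronglyMeasurable (by continuity)).mul hfm)
  · intro n
    filter_upwards [ae_restrict_mem measurableSet_Ioi] with t ht
    have ht' : (0:ℝ) < t := ht
    have h0 : 0 ≤ 1 - Real.exp (-((n:ℝ) * t)) := by
      have hn : (0:ℝ) ≤ (n:ℝ)*t := by positivity
      simp only [sub_nonneg, Real.exp_le_one_iff]
      linarith
    have h1 : 1 - Real.exp (-((n:ℝ) * t)) ≤ 1 := by
      have := (Real.exp_pos (-((n:ℝ) * t))).le; linarith
    rw [Real.norm_eq_abs, abs_of_nonneg (mul_nonneg h0 (fγ_nonneg ht'))]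
    calc (1 - Real.exp (-((n:ℝ) * t))) * fγ t ≤ 1 * fγ t :=
          mul_le_mul_of_nonneg_right h1 (fγ_nonneg ht')
      _ = fγ t := one_mul _
      _ ≤ Real.exp (-t) := fγ_le ht'
  · filter_upwards [ae_restrict_mem measurableSet_Ioi] with t ht
    have ht' : (0:ℝ) < t := ht
    have hlt : Real.exp (-t) < 1 := by
      rw [Real.exp_lt_one_iff]; linarith
    have hpow : ∀ n : ℕ, Real.exp (-((n:ℝ) * t)) = (Real.exp (-t))^n := by
      intro n
      rw [← Real.exp_nat_mul]
      ring_nf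
    have h2 : Tendsto (fun n : ℕ => Real.exp (-((n:ℝ) * t))) atTop (𝓝 0) := by
      simp_rw [hpow]
      exact tendsto_pow_atTop_nhds_zero_of_lt_one (Real.exp_pos _).le hlt
    have h3 : Tendsto (fun n : ℕ => (1 - Real.exp (-((n:ℝ) * t))) * fγ t) atTop
        (𝓝 ((1 - 0) * fγ t)) :=
      ((tendsto_const_nhds (x := (1:ℝ))).sub h2).mul (tendsto_const_nhds (x := fγ t))
    simpa using h3

theorem integral_one_div_exp_sub_one_sub_one_div_mul_exp :
    (∫ t in Set.Ioi (0:ℝ), (1 / (Real.exp t - 1) - 1 / (t * Real.exp t)) : ℝ) =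
      Real.eulerMascheroniConstant := by
  have h1 := main_tendsto
  have h2 : Tendsto (fun n : ℕ => ∫ t in Ioi (0:ℝ), (1 - Real.exp (-((n:ℝ) * t))) * fγ t)
      atTop (𝓝 Real.eulerMascheroniConstant) := by
    have : (fun n : ℕ => ∫ t in Ioi (0:ℝ), (1 - Real.exp (-((n:ℝ) * t))) * fγ t)
        = Real.eulerMascheroniSeq := by
      funext n
      rw [Fn_integral n, Real.eulerMascheroniSeq]
    rw [this]
    exact Real.tendsto_eulerMascheroniSeq
  have := tendsto_nhds_unique h1 h2
  rw [← this]
  rfl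
end

section
/- For every integer n ≥ 4, ∑_{k=2}^{n-2} C(n,k)·Bₖ·B_{n-k} = -(n+1)·Bₙ. -/
open PowerSeries Finset

local notation "B" => bernoulliPowerSeries ℚ

lemma derivative_exp' : (d⁄dX ℚ) (exp ℚ) = exp ℚ := by
  ext n
  rw [coeff_derivative, coeff_exp, coeff_exp]
  have h : (Nat.factorial (n+1) : ℚ) ≠ 0 := by exact_mod_cast Nat.factorial_ne_zero (n+1)
  have h2 : (Nat.factorial (n+1) : ℚ) = (n+1) * Nat.factorial n := by exact_mod_cast Nat.factorial_succ n
  have h3 : (Nat.factorial n : ℚ) ≠ 0 := by exact_mod_cast Nat.factorial_ne_zero n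
  simp only [Algebra.algebraMap_self, RingHom.id_apply]
  rw [h2]
  field_simp

lemma bps_sq : B * B = B - X * B - X * (d⁄dX ℚ B) := by
  have h := bernoulliPowerSeries_mul_exp_sub_one ℚ
  have hd := congrArg (d⁄dX ℚ) h
  rw [Derivation.leibniz, derivative_X, map_sub, derivative_exp',
    Derivation.map_one_eq_zero, sub_zero, smul_eq_mul, smul_eq_mul] at hd
  linear_combination B * hd - ((d⁄dX ℚ) B) * h - B * h

lemma bernoulli_full_conv (n : ℕ) :
    ∑ k ∈ Finset.range (n + 1), (n.choose k : ℚ) * bernoulli k * bernoulli (n - k) =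
      (1 - (n : ℚ)) * bernoulli n - (n : ℚ) * bernoulli (n - 1) := by
  rcases n with _ | m
  · simp
  have hco := congrArg (coeff (m + 1)) bps_sq
  rw [coeff_mul, Finset.Nat.sum_antidiagonal_eq_sum_range_succ_mk, map_sub, map_sub,
    coeff_succ_X_mul, coeff_succ_X_mul, coeff_derivative] at hco
  simp only [bernoulliPowerSeries, coeff_mk, Algebra.algebraMap_self, RingHom.id_apply] at hco
  have key : ∑ k ∈ Finset.range (m + 2), ((m+1).choose k : ℚ) * bernoulli k * bernoulli (m + 1 - k)
      = (Nat.factorial (m+1) : ℚ) * ∑ k ∈ Finset.range (m + 2),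
          bernoulli k / Nat.factorial k * (bernoulli (m + 1 - k) / Nat.factorial (m + 1 - k)) := by
    rw [Finset.mul_sum]
    refine Finset.sum_congr rfl fun k hk => ?_
    rw [Finset.mem_range] at hk
    rw [Nat.cast_choose ℚ (by omega : k ≤ m + 1)]
    have h1 : (Nat.factorial k : ℚ) ≠ 0 := by exact_mod_cast Nat.factorial_ne_zero k
    have h2 : (Nat.factorial (m + 1 - k) : ℚ) ≠ 0 := by exact_mod_cast Nat.factorial_ne_zero (m + 1 - k)
    field_simp
  rw [show m + 1 + 1 = m + 2 from rfl, key, hco, show m + 1 - 1 = m from rfl]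
  have h1 : (Nat.factorial (m+1) : ℚ) = (m+1) * Nat.factorial m := by exact_mod_cast Nat.factorial_succ m
  have h3 : (Nat.factorial m : ℚ) ≠ 0 := by exact_mod_cast Nat.factorial_ne_zero m
  push_cast
  rw [h1]
  field_simp
  ring

theorem bernoulli_convolution_euler (n : ℕ) (hn : 4 ≤ n) :
    ∑ k ∈ Finset.Icc 2 (n - 2), (n.choose k : ℚ) * bernoulli k * bernoulli (n - k) =
      -((n : ℚ) + 1) * bernoulli n := by
  obtain ⟨m, rfl⟩ : ∃ m, n = m + 4 := ⟨n - 4, by omega⟩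
  have hfull := bernoulli_full_conv (m + 4)
  set f : ℕ → ℚ := fun k => ((m+4).choose k : ℚ) * bernoulli k * bernoulli (m + 4 - k) with hf
  have hsplit : ∑ k ∈ Finset.range (m + 4 + 1), f k
      = f 0 + f 1 + (∑ k ∈ Finset.Icc 2 (m + 2), f k) + f (m + 3) + f (m + 4) := by
    have e1 : Finset.range (m + 4 + 1) =
        insert 0 (insert 1 (insert (m+3) (insert (m+4) (Finset.Icc 2 (m+2))))) := by
      ext x; simp [Finset.mem_Icc, Finset.mem_range]; omega
    rw [e1, Finset.sum_insert (by simp only [Finset.mem_insert, Finset.mem_Icc]; omega),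
      Finset.sum_insert (by simp only [Finset.mem_insert, Finset.mem_Icc]; omega),
      Finset.sum_insert (by simp only [Finset.mem_insert, Finset.mem_Icc]; omega),
      Finset.sum_insert (by simp only [Finset.mem_insert, Finset.mem_Icc]; omega)]
    ring
  have hsub : m + 4 - 2 = m + 2 := by omega
  rw [hsub]
  rw [hsplit] at hfull
  have h0 : f 0 = bernoulli (m + 4) := by
    simp only [hf, Nat.choose_zero_right, Nat.cast_one, bernoulli_zero, Nat.sub_zero]
    ring
  have h1 : f 1 = -((m : ℚ) + 4) / 2 * bernoulli (m + 3) := by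
    simp only [hf, Nat.choose_one_right, bernoulli_one, show m + 4 - 1 = m + 3 from rfl]
    push_cast; ring
  have h3 : f (m + 3) = -((m : ℚ) + 4) / 2 * bernoulli (m + 3) := by
    have hc : (m+4).choose (m+3) = m + 4 := by
      rw [show m + 4 = (m + 3) + 1 from rfl, Nat.choose_succ_self_right]
    simp only [hf, hc, show m + 4 - (m + 3) = 1 from by omega, bernoulli_one]
    push_cast; ring
  have h4 : f (m + 4) = bernoulli (m + 4) := by
    simp only [hf, Nat.choose_self, Nat.cast_one, show m + 4 - (m + 4) = 0 from by omega,
      bernoulli_zero]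
    ring
  rw [h0, h1, h3, h4, show m + 4 - 1 = m + 3 from rfl] at hfull
  push_cast at hfull ⊢
  linarith [hfull]
end

section
/- The improper integral ∫₀^∞ e^{-t}·((t/(e^t - 1))² - 1) dt equals -4ζ(3) + 2ζ(2) + 1. -/
open MeasureTheory Real Set

lemma int_g {a : ℝ} (ha : 0 < a) :
    ∫ t in Set.Ioi (0:ℝ), t ^ 2 * Real.exp (-(a * t)) = 2 / a ^ 3 := by
  have h := Real.integral_rpow_mul_exp_neg_mul_Ioi (by norm_num : (0:ℝ) < 3) ha
  have hG : Real.Gamma 3 = 2 := by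
    rw [show (3:ℝ) = ((2:ℕ):ℝ) + 1 by norm_num, Real.Gamma_nat_eq_factorial]; norm_num
  rw [setIntegral_congr_fun measurableSet_Ioi
      (fun t ht => by
        rw [show (3:ℝ) - 1 = ((2:ℕ):ℝ) by norm_num, Real.rpow_natCast])] at h
  rw [h, hG, show ((1:ℝ)/a) ^ (3:ℝ) = (1/a) ^ (3:ℕ) by rw [← Real.rpow_natCast]; norm_num]
  field_simp

lemma hasSum_pt {t : ℝ} (ht : 0 < t) :
    HasSum (fun n : ℕ => ((n:ℝ)+1) * (t^2 * Real.exp (-(((n:ℝ)+3) * t))))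
      (Real.exp (-t) * (t / (Real.exp t - 1)) ^ 2) := by
  set x := Real.exp (-t) with hxdef
  have hx0 : 0 < x := Real.exp_pos _
  have hx1 : x < 1 := by
    rw [hxdef, Real.exp_lt_one_iff]; linarith
  have h1 : HasSum (fun n : ℕ => ((n:ℝ)) * x ^ n) (x/(1-x)^2) :=
    hasSum_coe_mul_geometric_of_norm_lt_one (by rwa [Real.norm_eq_abs, abs_of_pos hx0])
  have h2 : HasSum (fun n : ℕ => x ^ n) ((1-x)⁻¹) := hasSum_geometric_of_lt_one hx0.le hx1
  have h3 := (h1.add h2).mul_left (t^2 * x^3)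
  have hexp : ∀ n : ℕ, Real.exp (-(((n:ℝ)+3) * t)) = x ^ n * x ^ 3 := fun n => by
    rw [show -(((n:ℝ)+3)*t) = ((n+3:ℕ):ℝ) * (-t) by push_cast; ring, Real.exp_nat_mul,
      ← hxdef, pow_add]
  convert h3 using 1
  · rfl
  · funext n
    rw [hexp]; ring
  · -- value identity
    have hE : Real.exp t = x⁻¹ := by rw [hxdef, Real.exp_neg, inv_inv]
    have h1x : (1:ℝ) - x ≠ 0 := by linarith
    have he1 : Real.exp t - 1 ≠ 0 := by
      have : (1:ℝ) < Real.exp t := by rw [hE]; exact (one_lt_inv₀ hx0).mpr hx1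
      linarith
    rw [hE]
    field_simp
    ring

lemma g_integrable {a : ℝ} (ha : 0 < a) :
    IntegrableOn (fun t : ℝ => t ^ 2 * Real.exp (-(a * t))) (Set.Ioi 0) := by
  have h := integrableOn_rpow_mul_exp_neg_mul_rpow
    (by norm_num : (-1:ℝ) < 2) (by norm_num : (0:ℝ) < 1) ha
  refine h.congr_fun (fun t ht => ?_) measurableSet_Ioi
  dsimp only
  rw [Real.rpow_one, show ((2:ℝ)) = ((2:ℕ):ℝ) by norm_num, Real.rpow_natCast, neg_mul]

lemma hZ2 : Summable (fun n : ℕ => 1 / (n : ℝ) ^ 2) := summable_one_div_nat_pow.mpr one_lt_two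
lemma hZ3 : Summable (fun n : ℕ => 1 / (n : ℝ) ^ 3) :=
  summable_one_div_nat_pow.mpr (by norm_num)

lemma hS2 : Summable (fun n : ℕ => 1 / ((n : ℝ) + 3) ^ 2) := by
  refine ((_root_.summable_nat_add_iff 3).mpr hZ2).congr fun n => ?_
  push_cast; ring

lemma hS3 : Summable (fun n : ℕ => 1 / ((n : ℝ) + 3) ^ 3) := by
  refine ((_root_.summable_nat_add_iff 3).mpr hZ3).congr fun n => ?_
  push_cast; ring

lemma tailS2 : ∑' n : ℕ, 1 / ((n : ℝ) + 3) ^ 2 = (∑' n : ℕ, 1 / (n : ℝ) ^ 2) - 5/4 := by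
  have h := Summable.sum_add_tsum_nat_add 3 hZ2
  have h2 : ∑' n : ℕ, 1 / ((n : ℝ) + 3) ^ 2 = ∑' n : ℕ, 1 / ((n + 3 : ℕ) : ℝ) ^ 2 :=
    tsum_congr fun n => by push_cast; ring
  have h3 : ∑ i ∈ Finset.range 3, 1 / (i : ℝ) ^ 2 = 5/4 := by
    simp [Finset.sum_range_succ]; norm_num
  rw [h2]; linarith [h]

lemma tailS3 : ∑' n : ℕ, 1 / ((n : ℝ) + 3) ^ 3 = (∑' n : ℕ, 1 / (n : ℝ) ^ 3) - 9/8 := by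
  have h := Summable.sum_add_tsum_nat_add 3 hZ3
  have h2 : ∑' n : ℕ, 1 / ((n : ℝ) + 3) ^ 3 = ∑' n : ℕ, 1 / ((n + 3 : ℕ) : ℝ) ^ 3 :=
    tsum_congr fun n => by push_cast; ring
  have h3 : ∑ i ∈ Finset.range 3, 1 / (i : ℝ) ^ 3 = 9/8 := by
    simp [Finset.sum_range_succ]; norm_num
  rw [h2]; linarith [h]

lemma real_main :
    (∫ t in Set.Ioi (0:ℝ), Real.exp (-t) * ((t / (Real.exp t - 1)) ^ 2 - 1)) =
      -4 * (∑' n : ℕ, 1 / (n : ℝ) ^ 3) + 2 * (∑' n : ℕ, 1 / (n : ℝ) ^ 2) + 1 := by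
  set F : ℝ → ℝ := fun t => Real.exp (-t) * (t / (Real.exp t - 1)) ^ 2 with hFdef
  have hGint : IntegrableOn (fun t : ℝ => Real.exp (-t)) (Set.Ioi 0) := by
    simpa using exp_neg_integrableOn_Ioi 0 one_pos
  have hFmeas : AEStronglyMeasurable F (volume.restrict (Set.Ioi 0)) := by
    apply Measurable.aestronglyMeasurable
    fun_prop
  have hFbound : ∀ t ∈ Set.Ioi (0:ℝ), ‖F t‖ ≤ Real.exp (-t) := by
    intro t ht
    have ht' : (0:ℝ) < t := ht
    have he1 : (0:ℝ) < Real.exp t - 1 := by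
      have : (1:ℝ) < Real.exp t := by
        calc (1:ℝ) = Real.exp 0 := Real.exp_zero.symm
        _ < Real.exp t := Real.exp_lt_exp.mpr ht'
      linarith
    have h1 : 0 ≤ t / (Real.exp t - 1) := div_nonneg ht'.le he1.le
    have h2 : t / (Real.exp t - 1) ≤ 1 := by
      rw [div_le_one he1]
      have := Real.add_one_le_exp t
      linarith
    have hnn : 0 ≤ F t := by rw [hFdef]; positivity
    rw [Real.norm_of_nonneg hnn, hFdef]
    calc Real.exp (-t) * (t / (Real.exp t - 1)) ^ 2 ≤ Real.exp (-t) * 1 :=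
      mul_le_mul_of_nonneg_left (pow_le_one₀ h1 h2) (Real.exp_pos _).le
    _ = Real.exp (-t) := mul_one _
  have hFint : IntegrableOn F (Set.Ioi 0) := by
    refine Integrable.mono' hGint hFmeas ?_
    rw [ae_restrict_iff' measurableSet_Ioi]
    exact Filter.Eventually.of_forall hFbound
  have key : ∫ t in Set.Ioi (0:ℝ), F t =
      -4 * (∑' n : ℕ, 1 / (n : ℝ) ^ 3) + 2 * (∑' n : ℕ, 1 / (n : ℝ) ^ 2) + 2 := by
    set g : ℕ → ℝ → ℝ := fun n t => ((n:ℝ)+1) * (t^2 * Real.exp (-(((n:ℝ)+3) * t))) with hgdef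
    have hgint : ∀ n : ℕ, IntegrableOn (g n) (Set.Ioi 0) := fun n =>
      (g_integrable (by positivity : (0:ℝ) < (n:ℝ)+3)).const_mul _
    have hgval : ∀ n : ℕ, ∫ t in Set.Ioi (0:ℝ), g n t = ((n:ℝ)+1) * (2 / ((n:ℝ)+3)^3) := by
      intro n
      rw [hgdef]
      simp only
      rw [MeasureTheory.integral_const_mul, int_g (by positivity : (0:ℝ) < (n:ℝ)+3)]
    have hsum : Summable fun n : ℕ => ∫ t in Set.Ioi (0:ℝ), ‖g n t‖ := by
      have heq : ∀ n : ℕ, (∫ t in Set.Ioi (0:ℝ), ‖g n t‖) = ((n:ℝ)+1) * (2 / ((n:ℝ)+3)^3) := by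
        intro n
        rw [← hgval n]
        refine integral_congr_ae (Filter.Eventually.of_forall fun t => ?_)
        show ‖g n t‖ = g n t
        simp only [hgdef]
        rw [Real.norm_of_nonneg (by positivity)]
      rw [funext heq]
      refine Summable.of_nonneg_of_le (fun n => by positivity) (fun n => ?_)
        (hS2.mul_left 2)
      have h3 : (0:ℝ) < ((n:ℝ)+3)^3 := by positivity
      have h2 : (0:ℝ) < ((n:ℝ)+3)^2 := by positivity
      rw [show ((n:ℝ)+1) * (2/((n:ℝ)+3)^3) = (2*((n:ℝ)+1))/((n:ℝ)+3)^3 by ring,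
        show (2:ℝ) * (1/((n:ℝ)+3)^2) = 2/((n:ℝ)+3)^2 by ring,
        div_le_div_iff₀ h3 h2]
      nlinarith [Nat.cast_nonneg (α := ℝ) n]
    have hinterchange := MeasureTheory.integral_tsum_of_summable_integral_norm hgint hsum
    have hFsum : ∫ t in Set.Ioi (0:ℝ), F t = ∑' n : ℕ, ∫ t in Set.Ioi (0:ℝ), g n t := by
      rw [hinterchange]
      exact setIntegral_congr_fun measurableSet_Ioi fun t ht => ((hasSum_pt ht).tsum_eq).symm
    have hterm : ∀ n : ℕ, ((n:ℝ)+1) * (2 / ((n:ℝ)+3)^3) =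
        2 * (1/((n:ℝ)+3)^2) - 4 * (1/((n:ℝ)+3)^3) := by
      intro n
      have h0 : ((n:ℝ)+3) ≠ 0 := by positivity
      field_simp
      ring
    rw [hFsum, tsum_congr hgval, tsum_congr hterm,
      Summable.tsum_sub (hS2.mul_left 2) (hS3.mul_left 4), tsum_mul_left, tsum_mul_left,
      tailS2, tailS3]
    ring
  have hsplit : (∫ t in Set.Ioi (0:ℝ), Real.exp (-t) * ((t / (Real.exp t - 1)) ^ 2 - 1)) =
      (∫ t in Set.Ioi (0:ℝ), F t) - ∫ t in Set.Ioi (0:ℝ), Real.exp (-t) := by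
    rw [← integral_sub hFint hGint]
    exact integral_congr_ae (Filter.Eventually.of_forall fun t => by rw [hFdef]; ring)
  rw [hsplit, key, integral_exp_neg_Ioi_zero]
  ring

theorem integral_exp_neg_mul_bernoulli_sq :
    ((∫ t in Set.Ioi (0:ℝ), Real.exp (-t) * ((t / (Real.exp t - 1)) ^ 2 - 1) : ℝ) : ℂ) =
      -4 * riemannZeta 3 + 2 * riemannZeta 2 + 1 := by
  have z3 : riemannZeta 3 = ((∑' n : ℕ, 1 / (n : ℝ) ^ 3 : ℝ) : ℂ) := by
    rw [show (3:ℂ) = ((3:ℕ):ℂ) by norm_num, zeta_nat_eq_tsum_of_gt_one (by norm_num),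
      Complex.ofReal_tsum]
    exact tsum_congr fun n => by push_cast; ring
  have z2 : riemannZeta 2 = ((∑' n : ℕ, 1 / (n : ℝ) ^ 2 : ℝ) : ℂ) := by
    rw [show (2:ℂ) = ((2:ℕ):ℂ) by norm_num, zeta_nat_eq_tsum_of_gt_one (by norm_num),
      Complex.ofReal_tsum]
    exact tsum_congr fun n => by push_cast; ring
  rw [real_main, z3, z2]
  push_cast
  ring
end
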